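/- For a composition μ of m and the permutation σ_μ of {1,...,m} given by the product of disjoint cycles of lengths μ_1,...,μ_l, the map (ξ, f, {g_P}) ↦ η(ξ, f, {g_P}) is injective: distinct data give distinct σ_μ-invariant set partitions of {1,...,m}. -/
import Mathlib


/-- The permutation `σ_μ` of `{0,…,m-1}` (0-indexed) attached to a composition
`μ = (μ_1,…,μ_l)` of `m`: the product of the cycles on the consecutive blocks
of sizes `μ_1, …, μ_l`. -/
def sigmaC : List ℕ → ℕ → ℕ
  | [], x => x
  | c :: rest, x => if x < c then (x + 1) % c else c + sigmaC rest (x - c)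

/-- `a i = μ_1 + ⋯ + μ_i`. -/
def partialSum (μ : List ℕ) (i : ℕ) : ℕ := (μ.take i).sum

/-- `PP` is a set partition of `{0,…,m-1}`. -/
def IsPartitionOn (m : ℕ) (PP : Set (Set ℕ)) : Prop :=
  (∀ B ∈ PP, B.Nonempty ∧ B ⊆ Set.Iio m) ∧ ∀ x < m, ∃! B, B ∈ PP ∧ x ∈ B

/-- `PP` is fixed (setwise) by `σ`: the permutation permutes the parts. -/
def Invariant (σ : ℕ → ℕ) (PP : Set (Set ℕ)) : Prop := ∀ B ∈ PP, σ '' B ∈ PP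

/-- The common refinement of two set partitions. -/
def commonRefinement (PP QQ : Set (Set ℕ)) : Set (Set ℕ) :=
  {S | ∃ B ∈ PP, ∃ C ∈ QQ, S = B ∩ C ∧ S.Nonempty}

/-- The datum `(ξ, f, {g_P})` of the construction `η`: a set partition `ξ` of
`{0,…,l-1}` (`l` = number of parts of `μ`), a choice for each part `P` of `ξ`
of a common divisor `f P` of the `μ_i`, `i ∈ P`, and normalized functions
`g_P : P → {0,…,f(P)-1}` with `g_P(min P) = 0`. -/
structure EtaDatum (μ : List ℕ) where
  xi : Set (Set ℕ)
  f : Set ℕ → ℕ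
  g : Set ℕ → ℕ → ℕ
  hxi : IsPartitionOn μ.length xi
  hf : ∀ P ∈ xi, ∀ i ∈ P, f P ∣ μ.getD i 0
  hf0 : ∀ P, P ∉ xi → f P = 0
  hg : ∀ P ∈ xi, ∀ i ∈ P, g P i < f P
  hg0 : ∀ P i, P ∉ xi ∨ i ∉ P → g P i = 0
  hgmin : ∀ P ∈ xi, g P (sInf P) = 0

/-- The set `N_P = ∪_{i∈P} {a_i + g_P(i) + j·f(P) : 0 ≤ j < μ_i / f(P)}`. -/
def NP (μ : List ℕ) (D : EtaDatum μ) (P : Set ℕ) : Set ℕ :=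
  ⋃ i ∈ P, {x | ∃ j : ℕ, j * D.f P < μ.getD i 0 ∧
    x = partialSum μ i + D.g P i + j * D.f P}

/-- The set partition `η(ξ, f, {g_P})`, whose parts are the sets
`σ_μ^r(N_P)` for parts `P` of `ξ` and `r ≥ 1`. -/
def eta (μ : List ℕ) (D : EtaDatum μ) : Set (Set ℕ) :=
  {S | ∃ P ∈ D.xi, ∃ r : ℕ, 1 ≤ r ∧ S = (sigmaC μ)^[r] '' NP μ D P}

/-! ### Auxiliary lemmas -/

lemma partialSum_succ (μ : List ℕ) (i : ℕ) :
    partialSum μ (i+1) = partialSum μ i + μ.getD i 0 := by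
  induction μ generalizing i with
  | nil => simp [partialSum]
  | cons c rest ih =>
    cases i with
    | zero => simp [partialSum]
    | succ n =>
      simp only [partialSum, List.take_succ_cons, List.sum_cons, List.getD_cons_succ] at *
      rw [ih]; omega

lemma partialSum_mono (μ : List ℕ) : Monotone (partialSum μ) := by
  apply monotone_nat_of_le_succ
  intro n; rw [partialSum_succ]; omega

lemma getD_pos (μ : List ℕ) (hpos : ∀ c ∈ μ, 0 < c) {i : ℕ} (hi : i < μ.length) :
    0 < μ.getD i 0 := by
  rw [List.getD_eq_getElem μ 0 hi]
  exact hpos _ (List.getElem_mem hi)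

lemma block_unique (μ : List ℕ) {i i' x : ℕ}
    (h1 : partialSum μ i ≤ x) (h2 : x < partialSum μ (i+1))
    (h3 : partialSum μ i' ≤ x) (h4 : x < partialSum μ (i'+1)) : i = i' := by
  by_contra hne
  rcases Nat.lt_or_ge i i' with h | h
  · have := partialSum_mono μ (show i+1 ≤ i' from h); omega
  · have h' : i' < i := by omega
    have := partialSum_mono μ (show i'+1 ≤ i from h'); omega

lemma partialSum_cons (c : ℕ) (rest : List ℕ) (n : ℕ) :
    partialSum (c :: rest) (n+1) = c + partialSum rest n := by
  simp [partialSum]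

lemma sigmaC_apply (μ : List ℕ) (i t : ℕ) (hi : i < μ.length) (ht : t < μ.getD i 0) :
    sigmaC μ (partialSum μ i + t) = partialSum μ i + (t + 1) % μ.getD i 0 := by
  induction μ generalizing i with
  | nil => simp at hi
  | cons c rest ih =>
    cases i with
    | zero =>
      simp only [List.getD_cons_zero] at ht ⊢
      have h0 : partialSum (c :: rest) 0 = 0 := rfl
      rw [h0, zero_add, zero_add]
      simp [sigmaC, ht]
    | succ n =>
      simp only [List.getD_cons_succ] at ht ⊢
      rw [partialSum_cons]
      have hx : ¬ (c + partialSum rest n + t < c) := by omega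
      rw [show sigmaC (c :: rest) (c + partialSum rest n + t)
          = if c + partialSum rest n + t < c then (c + partialSum rest n + t + 1) % c
            else c + sigmaC rest (c + partialSum rest n + t - c) from rfl,
        if_neg hx]
      have : c + partialSum rest n + t - c = partialSum rest n + t := by omega
      rw [this, ih n (by simpa using hi) ht]
      omega

lemma sigmaC_iterate (μ : List ℕ) (i t r : ℕ) (hi : i < μ.length) (ht : t < μ.getD i 0) :
    (sigmaC μ)^[r] (partialSum μ i + t) = partialSum μ i + (t + r) % μ.getD i 0 := by
  induction r with
  | zero =>
    simp only [Function.iterate_zero, id_eq]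
    rw [Nat.mod_eq_of_lt (show t + 0 < μ.getD i 0 by omega)]
    omega
  | succ n ihr =>
    rw [Function.iterate_succ_apply', ihr,
      sigmaC_apply μ i _ hi (Nat.mod_lt _ (by omega)),
      Nat.mod_add_mod]
    ring_nf

/-- The abstract form of the sets `N_P` (with arbitrary offsets). -/
def progSet (μ : List ℕ) (P : Set ℕ) (f : ℕ) (h : ℕ → ℕ) : Set ℕ :=
  ⋃ i ∈ P, {x | ∃ j : ℕ, j * f < μ.getD i 0 ∧ x = partialSum μ i + h i + j * f}

lemma NP_eq (μ : List ℕ) (D : EtaDatum μ) (P : Set ℕ) :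
    NP μ D P = progSet μ P (D.f P) (D.g P) := rfl

lemma mem_progSet (μ : List ℕ) (P : Set ℕ) (f : ℕ) (h : ℕ → ℕ)
    (hdvd : ∀ i ∈ P, f ∣ μ.getD i 0) (hh : ∀ i ∈ P, h i < f) (x : ℕ) :
    x ∈ progSet μ P f h ↔ ∃ i ∈ P, partialSum μ i ≤ x ∧ x < partialSum μ (i+1) ∧
      (x - partialSum μ i) % f = h i := by
  simp only [progSet, Set.mem_iUnion, Set.mem_setOf_eq]
  constructor
  · rintro ⟨i, hiP, j, hj, rfl⟩
    have hhf := hh i hiP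
    have hf : 0 < f := by omega
    obtain ⟨q, hq⟩ := hdvd i hiP
    have hjq : j < q := by
      by_contra hc
      push_neg at hc
      have h1 : f * q ≤ f * j := Nat.mul_le_mul_left f hc
      have h2 : f * j = j * f := Nat.mul_comm f j
      linarith
    have hjf : j * f + f ≤ μ.getD i 0 := by
      have h1 : (j + 1) * f ≤ q * f := Nat.mul_le_mul_right f hjq
      have h2 : (j+1) * f = j * f + f := by ring
      have h3 : q * f = f * q := Nat.mul_comm q f
      omega
    refine ⟨i, hiP, by omega, ?_, ?_⟩
    · rw [partialSum_succ]; omega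
    · rw [add_assoc, Nat.add_sub_cancel_left, Nat.add_mul_mod_self_right,
        Nat.mod_eq_of_lt hhf]
  · rintro ⟨i, hiP, h1, h2, h3⟩
    have hhf := hh i hiP
    have hf : 0 < f := by omega
    set t := x - partialSum μ i with hT
    have htM : t < μ.getD i 0 := by rw [partialSum_succ] at h2; omega
    have hdec : h i + t / f * f = t := by
      have := Nat.mod_add_div t f
      have h4 : f * (t / f) = t / f * f := Nat.mul_comm _ _
      omega
    refine ⟨i, hiP, t / f, ?_, ?_⟩
    · omega
    · omega

lemma progSet_congr (μ : List ℕ) (P : Set ℕ) (f : ℕ) (h h' : ℕ → ℕ)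
    (hc : ∀ i ∈ P, h i = h' i) : progSet μ P f h = progSet μ P f h' := by
  unfold progSet
  exact Set.iUnion₂_congr fun i hi => by rw [hc i hi]

lemma image_progSet (μ : List ℕ) (hpos : ∀ c ∈ μ, 0 < c) (P : Set ℕ) (f : ℕ) (h : ℕ → ℕ)
    (hP : ∀ i ∈ P, i < μ.length) (hdvd : ∀ i ∈ P, f ∣ μ.getD i 0)
    (hh : ∀ i ∈ P, h i < f) (r : ℕ) :
    (sigmaC μ)^[r] '' progSet μ P f h = progSet μ P f (fun i => (h i + r) % f) := by
  have hh' : ∀ i ∈ P, (h i + r) % f < f := fun i hi => Nat.mod_lt _ (by have := hh i hi; omega)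
  ext x
  rw [Set.mem_image, mem_progSet μ P f _ hdvd hh']
  constructor
  · rintro ⟨y, hy, rfl⟩
    rw [mem_progSet μ P f h hdvd hh] at hy
    obtain ⟨i, hiP, h1, h2, h3⟩ := hy
    have hiL := hP i hiP
    have hM : 0 < μ.getD i 0 := getD_pos μ hpos hiL
    have hfM := hdvd i hiP
    set t := y - partialSum μ i with hT
    have htM : t < μ.getD i 0 := by rw [partialSum_succ] at h2; omega
    have hy' : y = partialSum μ i + t := by omega
    rw [hy', sigmaC_iterate μ i t r hiL htM]
    refine ⟨i, hiP, by omega, ?_, ?_⟩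
    · rw [partialSum_succ]
      have := Nat.mod_lt (t + r) hM
      omega
    · rw [Nat.add_sub_cancel_left, Nat.mod_mod_of_dvd _ hfM, ← h3, Nat.mod_add_mod]
  · rintro ⟨i, hiP, h1, h2, h3⟩
    have hiL := hP i hiP
    have hM : 0 < μ.getD i 0 := getD_pos μ hpos hiL
    have hfM := hdvd i hiP
    have hf : 0 < f := by have := hh i hiP; omega
    set M := μ.getD i 0 with hMdef
    set t := x - partialSum μ i with hT
    have htM : t < M := by rw [partialSum_succ] at h2; omega
    set k := (r / M + 1) * M - r with hk
    have hrk : r + k = (r / M + 1) * M := by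
      have hd := Nat.mod_add_div r M
      have hm := Nat.mod_lt r hM
      have : (r / M + 1) * M = r / M * M + M := by ring
      have : M * (r / M) = r / M * M := Nat.mul_comm _ _
      omega
    have hMdvd : M ∣ r + k := ⟨r / M + 1, by rw [hrk]; ring⟩
    have hfdvdrk : f ∣ r + k := dvd_trans hfM hMdvd
    refine ⟨partialSum μ i + (t + k) % M, ?_, ?_⟩
    · rw [mem_progSet μ P f h hdvd hh]
      refine ⟨i, hiP, by omega, ?_, ?_⟩
      · rw [partialSum_succ]
        have := Nat.mod_lt (t + k) hM
        omega
      · rw [Nat.add_sub_cancel_left, Nat.mod_mod_of_dvd _ hfM]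
        have e1 : (t + k + r) % f = t % f := by
          have : t + k + r = t + (r + k) := by ring
          rw [this]
          obtain ⟨w, hw⟩ := hfdvdrk
          rw [hw, Nat.mul_comm f w, Nat.add_mul_mod_self_right]
        have e2 : t % f = (h i + r) % f := h3
        have e3 : ((t + k) % f + r) % f = (h i + r) % f := by
          rw [Nat.mod_add_mod, e1, e2]
        have e4 : (t + k) % f ≡ h i [MOD f] := Nat.ModEq.add_right_cancel' r e3
        have e5 : (t + k) % f % f = h i % f := e4
        rw [Nat.mod_mod_of_dvd _ dvd_rfl, Nat.mod_eq_of_lt (hh i hiP)] at e5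
        exact e5
    · rw [sigmaC_iterate μ i _ r hiL (Nat.mod_lt _ hM), Nat.mod_add_mod]
      have : (t + k + r) % M = t % M := by
        have h5 : t + k + r = t + (r + k) := by ring
        obtain ⟨w, hw⟩ := hMdvd
        rw [h5, hw, Nat.mul_comm M w, Nat.add_mul_mod_self_right]
      rw [this, Nat.mod_eq_of_lt htM]
      omega

lemma base_mem (μ : List ℕ) (P : Set ℕ) (f : ℕ) (h : ℕ → ℕ)
    (hdvd : ∀ i ∈ P, f ∣ μ.getD i 0)
    (hh : ∀ i ∈ P, h i < f) {i : ℕ} (hiP : i ∈ P) {u : ℕ} (hu : u < μ.getD i 0)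
    (hmod : u % f = h i) : partialSum μ i + u ∈ progSet μ P f h := by
  rw [mem_progSet μ P f h hdvd hh]
  refine ⟨i, hiP, by omega, ?_, ?_⟩
  · rw [partialSum_succ]; omega
  · rw [Nat.add_sub_cancel_left]; exact hmod

lemma progSet_support (μ : List ℕ) (hpos : ∀ c ∈ μ, 0 < c) (P P' : Set ℕ) (f f' : ℕ)
    (h h' : ℕ → ℕ)
    (hP : ∀ i ∈ P, i < μ.length) (hdvd : ∀ i ∈ P, f ∣ μ.getD i 0) (hh : ∀ i ∈ P, h i < f)
    (hdvd' : ∀ i ∈ P', f' ∣ μ.getD i 0) (hh' : ∀ i ∈ P', h' i < f')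
    (heq : progSet μ P f h = progSet μ P' f' h') : P ⊆ P' := by
  intro i hiP
  have hiL := hP i hiP
  have hf : 0 < f := by have := hh i hiP; omega
  have hfM : f ≤ μ.getD i 0 := Nat.le_of_dvd (getD_pos μ hpos hiL) (hdvd i hiP)
  have hx : partialSum μ i + h i ∈ progSet μ P f h :=
    base_mem μ P f h hdvd hh hiP (by have := hh i hiP; omega)
      (Nat.mod_eq_of_lt (hh i hiP))
  rw [heq, mem_progSet μ P' f' h' hdvd' hh'] at hx
  obtain ⟨i', hi', h1, h2, _⟩ := hx
  have hb1 : partialSum μ i ≤ partialSum μ i + h i := by omega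
  have hb2 : partialSum μ i + h i < partialSum μ (i+1) := by
    rw [partialSum_succ]; have := hh i hiP; omega
  have : i = i' := block_unique μ hb1 hb2 h1 h2
  rwa [this]

lemma progSet_slice (μ : List ℕ) (hpos : ∀ c ∈ μ, 0 < c) (P : Set ℕ) (f f' : ℕ)
    (h h' : ℕ → ℕ) (hP : ∀ i ∈ P, i < μ.length)
    (hdvd : ∀ i ∈ P, f ∣ μ.getD i 0) (hh : ∀ i ∈ P, h i < f)
    (hdvd' : ∀ i ∈ P, f' ∣ μ.getD i 0) (hh' : ∀ i ∈ P, h' i < f')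
    (heq : progSet μ P f h = progSet μ P f' h') :
    (∀ i ∈ P, h i = h' i) ∧ (P.Nonempty → f = f') := by
  have hmod : ∀ i ∈ P, (h i) % f' = h' i := by
    intro i hiP
    have hiL := hP i hiP
    have hx : partialSum μ i + h i ∈ progSet μ P f h :=
      base_mem μ P f h hdvd hh hiP
        (by have := hh i hiP; have := Nat.le_of_dvd (getD_pos μ hpos hiL) (hdvd i hiP); omega)
        (Nat.mod_eq_of_lt (hh i hiP))
    rw [heq, mem_progSet μ P f' h' hdvd' hh'] at hx
    obtain ⟨i', hi', h1, h2, h3⟩ := hx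
    have hb1 : partialSum μ i ≤ partialSum μ i + h i := by omega
    have hb2 : partialSum μ i + h i < partialSum μ (i+1) := by
      rw [partialSum_succ]
      have := hh i hiP
      have := Nat.le_of_dvd (getD_pos μ hpos hiL) (hdvd i hiP)
      omega
    have hii : i' = i := (block_unique μ hb1 hb2 h1 h2).symm
    rw [hii, Nat.add_sub_cancel_left] at h3
    exact h3
  have hmod' : ∀ i ∈ P, (h' i) % f = h i := by
    intro i hiP
    have hiL := hP i hiP
    have hx : partialSum μ i + h' i ∈ progSet μ P f' h' :=
      base_mem μ P f' h' hdvd' hh' hiP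
        (by have := hh' i hiP; have := Nat.le_of_dvd (getD_pos μ hpos hiL) (hdvd' i hiP); omega)
        (Nat.mod_eq_of_lt (hh' i hiP))
    rw [← heq, mem_progSet μ P f h hdvd hh] at hx
    obtain ⟨i', hi', h1, h2, h3⟩ := hx
    have hb1 : partialSum μ i ≤ partialSum μ i + h' i := by omega
    have hb2 : partialSum μ i + h' i < partialSum μ (i+1) := by
      rw [partialSum_succ]
      have := hh' i hiP
      have := Nat.le_of_dvd (getD_pos μ hpos hiL) (hdvd' i hiP)
      omega
    have hii : i' = i := (block_unique μ hb1 hb2 h1 h2).symm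
    rw [hii, Nat.add_sub_cancel_left] at h3
    exact h3
  have hhe : ∀ i ∈ P, h i = h' i := by
    intro i hiP
    have e1 := hmod i hiP
    have e2 := hmod' i hiP
    have l1 : h' i ≤ h i := e1 ▸ Nat.mod_le _ _
    have l2 : h i ≤ h' i := e2 ▸ Nat.mod_le _ _
    omega
  refine ⟨hhe, ?_⟩
  rintro ⟨i, hiP⟩
  have hiL := hP i hiP
  have hM : 0 < μ.getD i 0 := getD_pos μ hpos hiL
  have hf : 0 < f := by have := hh i hiP; omega
  have hf' : 0 < f' := by have := hh' i hiP; omega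
  by_contra hne
  have main : ∀ (a a' : ℕ) (k k' : ℕ → ℕ),
      (∀ i ∈ P, a ∣ μ.getD i 0) → (∀ i ∈ P, k i < a) →
      (∀ i ∈ P, a' ∣ μ.getD i 0) → (∀ i ∈ P, k' i < a') →
      progSet μ P a k = progSet μ P a' k' → (∀ j ∈ P, k j = k' j) → a < a' → False := by
    intro a a' k k' hd hk hd' hk' he hke hlt
    have ha : 0 < a := by have := hk i hiP; omega
    have haM : a ∣ μ.getD i 0 := hd i hiP
    have ha'M : a' ≤ μ.getD i 0 := Nat.le_of_dvd hM (hd' i hiP)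
    have h2a : 2 * a ≤ μ.getD i 0 := by
      obtain ⟨q, hq⟩ := haM
      have hq2 : 2 ≤ q := by
        by_contra hc
        push_neg at hc
        interval_cases q <;> omega
      have : 2 * a ≤ a * q := by nlinarith
      omega
    have hx : partialSum μ i + (k i + a) ∈ progSet μ P a k :=
      base_mem μ P a k hd hk hiP (by have := hk i hiP; omega)
        (by rw [Nat.add_mod_right, Nat.mod_eq_of_lt (hk i hiP)])
    rw [he, mem_progSet μ P a' k' hd' hk'] at hx
    obtain ⟨i', hi', h1, h2, h3⟩ := hx
    have hb1 : partialSum μ i ≤ partialSum μ i + (k i + a) := by omega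
    have hb2 : partialSum μ i + (k i + a) < partialSum μ (i+1) := by
      rw [partialSum_succ]; have := hk i hiP; omega
    have hii : i' = i := (block_unique μ hb1 hb2 h1 h2).symm
    rw [hii, Nat.add_sub_cancel_left, hke i hiP] at h3
    have hkk := hke i hiP
    have hlt2 : k' i + a < 2 * a' := by have := hk i hiP; omega
    by_cases hc : k' i + a < a'
    · rw [Nat.mod_eq_of_lt hc] at h3
      omega
    · push_neg at hc
      rw [Nat.mod_eq_sub_mod hc, Nat.mod_eq_of_lt (by omega)] at h3
      omega
  rcases Nat.lt_or_ge f f' with hlt | hge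
  · exact main f f' h h' hdvd hh hdvd' hh' heq hhe hlt
  · have hlt : f' < f := by omega
    exact main f' f h' h hdvd' hh' hdvd hh heq.symm (fun j hj => (hhe j hj).symm) hlt

lemma NP_mem_eta (μ : List ℕ) (hpos : ∀ c ∈ μ, 0 < c) (D : EtaDatum μ) (P : Set ℕ)
    (hP : P ∈ D.xi) : NP μ D P ∈ eta μ D := by
  obtain ⟨i0, hi0⟩ := (D.hxi.1 P hP).1
  have hf1 : 1 ≤ D.f P := by have := D.hg P hP i0 hi0; omega
  have hPl : ∀ i ∈ P, i < μ.length := fun i hi => (D.hxi.1 P hP).2 hi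
  refine ⟨P, hP, D.f P, hf1, ?_⟩
  rw [NP_eq μ D P, image_progSet μ hpos P _ _ hPl (D.hf P hP) (D.hg P hP)]
  exact progSet_congr μ P _ _ _ fun i hi => by
    rw [Nat.add_mod_right, Nat.mod_eq_of_lt (D.hg P hP i hi)]

lemma eta_key (μ : List ℕ) (hpos : ∀ c ∈ μ, 0 < c) (D1 D2 : EtaDatum μ)
    (heq : eta μ D1 = eta μ D2) {P : Set ℕ} (hP : P ∈ D1.xi) :
    P ∈ D2.xi ∧ ∃ r : ℕ, progSet μ P (D1.f P) (D1.g P)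
      = progSet μ P (D2.f P) (fun i => (D2.g P i + r) % D2.f P) := by
  have h1 : NP μ D1 P ∈ eta μ D2 := by rw [← heq]; exact NP_mem_eta μ hpos D1 P hP
  obtain ⟨Q, hQ, r, hr, hS⟩ := h1
  have hQl : ∀ i ∈ Q, i < μ.length := fun i hi => (D2.hxi.1 Q hQ).2 hi
  rw [NP_eq μ D2 Q, image_progSet μ hpos Q _ _ hQl (D2.hf Q hQ) (D2.hg Q hQ),
    NP_eq μ D1 P] at hS
  have hPl : ∀ i ∈ P, i < μ.length := fun i hi => (D1.hxi.1 P hP).2 hi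
  have hg2' : ∀ i ∈ Q, (D2.g Q i + r) % D2.f Q < D2.f Q := fun i hi =>
    Nat.mod_lt _ (by have := D2.hg Q hQ i hi; omega)
  have hPQ : P = Q := Set.Subset.antisymm
    (progSet_support μ hpos P Q _ _ _ _ hPl (D1.hf P hP) (D1.hg P hP)
      (D2.hf Q hQ) hg2' hS)
    (progSet_support μ hpos Q P _ _ _ _ hQl (D2.hf Q hQ) hg2'
      (D1.hf P hP) (D1.hg P hP) hS.symm)
  rw [← hPQ] at hQ hS
  exact ⟨hQ, r, hS⟩

/-- For a composition `μ` of `m` with all parts positive, the map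
`(ξ, f, {g_P}) ↦ η(ξ, f, {g_P})` is injective: distinct data give distinct
`σ_μ`-invariant set partitions of `{0,…,m-1}`. -/
theorem eta_injective (μ : List ℕ) (hpos : ∀ c ∈ μ, 0 < c) :
    Function.Injective (eta μ) := by
  intro D1 D2 heq
  have hxi : D1.xi = D2.xi := Set.ext fun P =>
    ⟨fun h => (eta_key μ hpos D1 D2 heq h).1, fun h => (eta_key μ hpos D2 D1 heq.symm h).1⟩
  have hdetail : ∀ P ∈ D1.xi, D1.f P = D2.f P ∧ ∀ i ∈ P, D1.g P i = D2.g P i := by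
    intro P hP
    have hP2 : P ∈ D2.xi := hxi ▸ hP
    obtain ⟨-, r, hS⟩ := eta_key μ hpos D1 D2 heq hP
    have hPl : ∀ i ∈ P, i < μ.length := fun i hi => (D1.hxi.1 P hP).2 hi
    have hg2' : ∀ i ∈ P, (D2.g P i + r) % D2.f P < D2.f P := fun i hi =>
      Nat.mod_lt _ (by have := D2.hg P hP2 i hi; omega)
    obtain ⟨hmod, hfeq⟩ := progSet_slice μ hpos P _ _ _ _ hPl (D1.hf P hP) (D1.hg P hP)
      (D2.hf P hP2) hg2' hS
    have hne : P.Nonempty := (D1.hxi.1 P hP).1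
    refine ⟨hfeq hne, ?_⟩
    have hinf : sInf P ∈ P := Nat.sInf_mem hne
    have h0 : r % D2.f P = 0 := by
      have := hmod (sInf P) hinf
      rw [D1.hgmin P hP, D2.hgmin P hP2, zero_add] at this
      omega
    obtain ⟨s, hs⟩ := Nat.dvd_of_mod_eq_zero h0
    intro i hi
    rw [hmod i hi, hs, Nat.add_mul_mod_self_left, Nat.mod_eq_of_lt (D2.hg P hP2 i hi)]
  have hfe : D1.f = D2.f := by
    funext P
    by_cases hP : P ∈ D1.xi
    · exact (hdetail P hP).1
    · rw [D1.hf0 P hP, D2.hf0 P (by rw [← hxi]; exact hP)]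
  have hge : D1.g = D2.g := by
    funext P i
    by_cases hP : P ∈ D1.xi
    · by_cases hi : i ∈ P
      · exact (hdetail P hP).2 i hi
      · rw [D1.hg0 P i (Or.inr hi), D2.hg0 P i (Or.inr hi)]
    · rw [D1.hg0 P i (Or.inl hP), D2.hg0 P i (Or.inl (by rw [← hxi]; exact hP))]
  obtain ⟨xi1, f1, g1, p1, p2, p3, p4, p5, p6⟩ := D1
  obtain ⟨xi2, f2, g2, q1, q2, q3, q4, q5, q6⟩ := D2
  dsimp at hxi hfe hge
  subst hxi; subst hfe; subst hge
  rfl
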